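/- Let B(z) = I + ((z₀ - ζ₀)/(z - z₀)) · (p q†)/(q†p) with q†p ≠ 0, and suppose at some point z* ≠ z₀ we have w† B(z*) = v† for row vectors w†, v† with w†p ≠ 0 and v†p ≠ 0. Then B(z) = I + (1/(z - z₀)) [ (z₀ - z*) (p w†)/(w†p) + (z* - ζ₀) (p v†)/(v†p) ] for all z ≠ z₀, assuming z₀ ≠ ζ₀. -/

import Mathlib

open Matrix

/-- Row-vector version: if `w† B(z⋆) = v†` for an elementary divisor `B`, then
`B(z) = I + (1/(z-z₀))[(z₀-z⋆)(p w†)/(w†p) + (z⋆-ζ₀)(p v†)/(v†p)]` for all `z ≠ z₀`. -/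
theorem elementary_divisor_from_coaction {m : ℕ} (p q w v : Fin m → ℂ) (z₀ ζ₀ zs : ℂ)
    (hpq : q ⬝ᵥ p ≠ 0) (hwp : w ⬝ᵥ p ≠ 0) (hvp : v ⬝ᵥ p ≠ 0)
    (hz0 : z₀ ≠ ζ₀) (hzs : zs ≠ z₀)
    (hwB : Matrix.vecMul w ((1 : Matrix (Fin m) (Fin m) ℂ) +
        ((z₀ - ζ₀) / (zs - z₀)) • (q ⬝ᵥ p)⁻¹ • Matrix.vecMulVec p q) = v) :
    ∀ z : ℂ, z ≠ z₀ →
      (1 : Matrix (Fin m) (Fin m) ℂ) +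
          ((z₀ - ζ₀) / (z - z₀)) • (q ⬝ᵥ p)⁻¹ • Matrix.vecMulVec p q
        = (1 : Matrix (Fin m) (Fin m) ℂ) + (z - z₀)⁻¹ •
            ((z₀ - zs) • (w ⬝ᵥ p)⁻¹ • Matrix.vecMulVec p w
              + (zs - ζ₀) • (v ⬝ᵥ p)⁻¹ • Matrix.vecMulVec p v) := by
  intro z hz
  have hzz : z - z₀ ≠ 0 := sub_ne_zero.mpr hz
  have hzs' : zs - z₀ ≠ 0 := sub_ne_zero.mpr hzs
  have key : ∀ (u : Fin m → ℂ), Matrix.vecMul u (Matrix.vecMulVec p q) = (u ⬝ᵥ p) • q := by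
    intro u
    funext j
    simp [Matrix.vecMul, dotProduct, Matrix.vecMulVec_apply, Finset.sum_mul, mul_assoc]
  have key2 : ∀ (u : Fin m → ℂ) (c : ℂ) (A : Matrix (Fin m) (Fin m) ℂ),
      Matrix.vecMul u (c • A) = c • Matrix.vecMul u A := by
    intro u c A
    funext j
    simp [Matrix.vecMul, dotProduct, Finset.mul_sum, mul_left_comm]
  set c : ℂ := (z₀ - ζ₀) / (zs - z₀) with hc
  have hv : v = w + (c * (q ⬝ᵥ p)⁻¹ * (w ⬝ᵥ p)) • q := by
    rw [← hwB, Matrix.vecMul_add, Matrix.vecMul_one, key2, key2, key]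
    funext j
    simp [mul_assoc, mul_comm, mul_left_comm]
  have hvpval : v ⬝ᵥ p = w ⬝ᵥ p + c * (q ⬝ᵥ p)⁻¹ * (w ⬝ᵥ p) * (q ⬝ᵥ p) := by
    rw [hv, add_dotProduct, smul_dotProduct, smul_eq_mul]
  have hvp2 : v ⬝ᵥ p = (w ⬝ᵥ p) * (1 + c) := by
    rw [hvpval]; field_simp
  have h1c : (1 : ℂ) + c ≠ 0 := by
    intro h
    apply hvp
    rw [hvp2, h, mul_zero]
  have hnum : zs - ζ₀ ≠ 0 := by
    intro h
    apply h1c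
    have h2 : z₀ - ζ₀ = -(zs - z₀) := by linear_combination h
    rw [hc, h2, neg_div, div_self hzs']
    ring
  funext i j
  simp only [Matrix.add_apply, Matrix.smul_apply, Matrix.vecMulVec_apply, smul_eq_mul]
  congr 1
  have hvj : v j = w j + c * (q ⬝ᵥ p)⁻¹ * (w ⬝ᵥ p) * q j := by
    rw [hv]; simp [mul_assoc]
  have hvp3 : v ⬝ᵥ p = (w ⬝ᵥ p) * (zs - ζ₀) / (zs - z₀) := by
    rw [hvp2, hc]; field_simp; ring
  have hinv : (w ⬝ᵥ p * (zs - ζ₀) / (zs - z₀))⁻¹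
      = (zs - z₀) * ((w ⬝ᵥ p)⁻¹ * (zs - ζ₀)⁻¹) := by
    rw [div_eq_mul_inv, mul_inv, mul_inv, inv_inv]; ring
  rw [hvj, hvp3, hc, hinv, div_eq_mul_inv]
  have e2 := mul_inv_cancel₀ hzs'
  have e4 := mul_inv_cancel₀ hwp
  have e5 := mul_inv_cancel₀ hnum
  linear_combination
    (-(z-z₀)⁻¹*(p i)*(z₀-ζ₀)*(q ⬝ᵥ p)⁻¹*(q j)*((zs-ζ₀)*(zs-ζ₀)⁻¹)*((zs-z₀)*(zs-z₀)⁻¹))*e4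
    + (-(z-z₀)⁻¹*(p i)*((zs-z₀)*(w ⬝ᵥ p)⁻¹*(w j) + (z₀-ζ₀)*(q ⬝ᵥ p)⁻¹*(q j)*((zs-z₀)*(zs-z₀)⁻¹)))*e5
    + (-(z-z₀)⁻¹*(p i)*(z₀-ζ₀)*(q ⬝ᵥ p)⁻¹*(q j))*e2
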